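/- arXiv:2106.12142 — 4 statements merged into one kernel-verified Lean document; each statement's English description precedes it below -/
import Mathlib

section
/- With S, A finite, γ ∈ (0,1), and π a fixed stochastic policy, define the inverse soft Bellman operator T^π : ℝ^{S×A} → ℝ^{S×A} by (T^π Q)(s,a) = Q(s,a) − γ · E_{s' ∼ P(s,a)}[V^π(s')], where V^π(s) = Σ_a π(a|s)·(Q(s,a) − log π(a|s)). Then T^π is a bijection, and for any r : S × A → ℝ, (T^π)^{-1}(r) is the unique fixed point of the soft Bellman operator B^π Q = r + γ·E_{s'}[V^π(s')]. -/
/-- The inverse soft Bellman operator T^π is a bijection, and for any reward r,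
(T^π)⁻¹ r is the unique fixed point of the soft Bellman operator B^π for r:
a function Q satisfies T^π Q = r iff it is a fixed point of B^π with reward r. -/
theorem inverse_soft_bellman_bijective
    {S A : Type*} [Fintype S] [Fintype A] [Nonempty S] [Nonempty A]
    (γ : ℝ) (hγ0 : 0 < γ) (hγ1 : γ < 1)
    (P : S → A → S → ℝ) (hPnn : ∀ s a s', 0 ≤ P s a s')
    (hPsum : ∀ s a, ∑ s', P s a s' = 1)
    (π : S → A → ℝ) (hπpos : ∀ s a, 0 < π s a)
    (hπsum : ∀ s, ∑ a, π s a = 1)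
    (V : (S × A → ℝ) → S → ℝ)
    (hV : ∀ Q s, V Q s = ∑ a, π s a * (Q (s, a) - Real.log (π s a)))
    (T : (S × A → ℝ) → (S × A → ℝ))
    (hT : ∀ Q sa, T Q sa = Q sa - γ * ∑ s', P sa.1 sa.2 s' * V Q s')
    (B : (S × A → ℝ) → (S × A → ℝ) → (S × A → ℝ))
    (hBdef : ∀ r Q sa, B r Q sa = r sa + γ * ∑ s', P sa.1 sa.2 s' * V Q s') :
    Function.Bijective T ∧
      ∀ r Q : S × A → ℝ, T Q = r ↔ B r Q = Q := by
  classical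
  -- the linear part
  set L : (S × A → ℝ) →ₗ[ℝ] (S × A → ℝ) :=
    { toFun := fun Q sa => ∑ s', P sa.1 sa.2 s' * ∑ a, π s' a * Q (s', a)
      map_add' := by
        intro Q1 Q2; funext sa
        simp [mul_add, Finset.sum_add_distrib, Finset.mul_sum]
      map_smul' := by
        intro c Q; funext sa
        simp [Finset.mul_sum, mul_comm, mul_left_comm] } with hLdef
  -- the constant part
  set k : S × A → ℝ :=
    fun sa => ∑ s', P sa.1 sa.2 s' * ∑ a, π s' a * Real.log (π s' a) with hkdef
  have hTQ : ∀ Q sa, T Q sa = Q sa - γ * L Q sa + γ * k sa := by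
    intro Q sa
    rw [hT]
    have : ∑ s', P sa.1 sa.2 s' * V Q s' = L Q sa - k sa := by
      simp only [hV, mul_sub, Finset.sum_sub_distrib, hLdef, hkdef,
        LinearMap.coe_mk, AddHom.coe_mk]
    rw [this]; ring
  -- contraction estimate
  have hbound : ∀ Q : S × A → ℝ, ∀ sa, |L Q sa| ≤ ‖Q‖ := by
    intro Q sa
    calc |∑ s', P sa.1 sa.2 s' * ∑ a, π s' a * Q (s', a)|
        ≤ ∑ s', |P sa.1 sa.2 s' * ∑ a, π s' a * Q (s', a)| :=
          Finset.abs_sum_le_sum_abs _ _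
      _ ≤ ∑ s', P sa.1 sa.2 s' * ‖Q‖ := by
          apply Finset.sum_le_sum
          intro s' _
          rw [abs_mul, abs_of_nonneg (hPnn _ _ _)]
          apply mul_le_mul_of_nonneg_left _ (hPnn _ _ _)
          calc |∑ a, π s' a * Q (s', a)|
              ≤ ∑ a, |π s' a * Q (s', a)| := Finset.abs_sum_le_sum_abs _ _
            _ ≤ ∑ a, π s' a * ‖Q‖ := by
                apply Finset.sum_le_sum
                intro a _
                rw [abs_mul, abs_of_pos (hπpos _ _)]
                apply mul_le_mul_of_nonneg_left _ (hπpos _ _).le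
                simpa [Real.norm_eq_abs] using norm_le_pi_norm Q (s', a)
            _ = ‖Q‖ := by rw [← Finset.sum_mul, hπsum, one_mul]
      _ = ‖Q‖ := by rw [← Finset.sum_mul, hPsum, one_mul]
  set f : (S × A → ℝ) →ₗ[ℝ] (S × A → ℝ) := LinearMap.id - γ • L with hfdef
  have hfapp : ∀ Q sa, f Q sa = Q sa - γ * L Q sa := by
    intro Q sa; simp [hfdef]
  have hker : ∀ Q, f Q = 0 → Q = 0 := by
    intro Q hQ
    have hnorm : ‖Q‖ ≤ γ * ‖Q‖ := by
      have h1 : ∀ sa, Q sa = γ * L Q sa := by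
        intro sa
        have := congrFun hQ sa
        rw [hfapp] at this
        simpa [sub_eq_zero] using this
      have : ‖Q‖ ≤ γ * ‖Q‖ := by
        apply (pi_norm_le_iff_of_nonneg (by positivity)).mpr
        intro sa
        rw [Real.norm_eq_abs, h1 sa, abs_mul, abs_of_pos hγ0]
        exact mul_le_mul_of_nonneg_left (hbound Q sa) hγ0.le
      exact this
    have : ‖Q‖ ≤ 0 := by nlinarith [norm_nonneg Q]
    exact norm_le_zero_iff.mp this
  have hinj : Function.Injective f := by
    intro Q1 Q2 h
    have : f (Q1 - Q2) = 0 := by rw [map_sub, h, sub_self]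
    have := hker _ this
    exact sub_eq_zero.mp this
  have hsurj : Function.Surjective f :=
    (LinearMap.injective_iff_surjective).mp hinj
  have hTf : ∀ Q sa, T Q sa = f Q sa + γ * k sa := by
    intro Q sa; rw [hTQ, hfapp]
  constructor
  · constructor
    · intro Q1 Q2 h
      apply hinj
      funext sa
      have := congrFun h sa
      rw [hTf, hTf] at this
      linarith
    · intro r
      obtain ⟨Q, hQ⟩ := hsurj (r - γ • k)
      refine ⟨Q, ?_⟩
      funext sa
      have := congrFun hQ sa
      simp only [Pi.sub_apply, Pi.smul_apply, smul_eq_mul] at this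
      rw [hTf]
      linarith
  · intro r Q
    constructor
    · intro h
      funext sa
      have := congrFun h sa
      rw [hT] at this
      rw [hBdef]
      linarith
    · intro h
      funext sa
      have := congrFun h sa
      rw [hBdef] at this
      rw [hT]
      linarith
end

section
/- Let J*(Q) = E_{ρ_E}[φ(Q(s,a) − γ·E_{s'∼P(s,a)}[V*(s')])] − (1−γ)·E_{s_0∼p_0}[V*(s_0)], where V*(s) = log Σ_a exp Q(s,a) and φ is concave and non-decreasing. Then J* is concave in Q ∈ ℝ^{S×A}. -/
open Finset

private lemma concaveOn_finsum {ι E : Type*} [AddCommMonoid E] [Module ℝ E]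
    (t : Finset ι) (f : ι → E → ℝ) (h : ∀ i ∈ t, ConcaveOn ℝ Set.univ (f i)) :
    ConcaveOn ℝ Set.univ (fun x => ∑ i ∈ t, f i x) := by
  classical
  induction t using Finset.induction with
  | empty => simpa using concaveOn_const (0 : ℝ) convex_univ
  | insert _ _ hni ih =>
      simp only [Finset.sum_insert hni]
      exact (h _ (Finset.mem_insert_self _ _)).add
        (ih fun i hi => h i (Finset.mem_insert_of_mem hi))

private lemma convexOn_finsum {ι E : Type*} [AddCommMonoid E] [Module ℝ E]
    (t : Finset ι) (f : ι → E → ℝ) (h : ∀ i ∈ t, ConvexOn ℝ Set.univ (f i)) :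
    ConvexOn ℝ Set.univ (fun x => ∑ i ∈ t, f i x) := by
  classical
  induction t using Finset.induction with
  | empty => simpa using convexOn_const (0 : ℝ) convex_univ
  | insert _ _ hni ih =>
      simp only [Finset.sum_insert hni]
      exact (h _ (Finset.mem_insert_self _ _)).add
        (ih fun i hi => h i (Finset.mem_insert_of_mem hi))

private lemma convexOn_const_mul {E : Type*} [AddCommMonoid E] [Module ℝ E]
    {c : ℝ} (hc : 0 ≤ c) {f : E → ℝ} (hf : ConvexOn ℝ Set.univ f) :
    ConvexOn ℝ Set.univ (fun x => c * f x) := by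
  simpa [Pi.smul_def, smul_eq_mul] using hf.smul hc

private lemma concaveOn_phi_comp {E : Type*} [AddCommMonoid E] [Module ℝ E]
    {φ : ℝ → ℝ} (hφconc : ConcaveOn ℝ Set.univ φ) (hφmono : Monotone φ)
    {f : E → ℝ} (hf : ConcaveOn ℝ Set.univ f) :
    ConcaveOn ℝ Set.univ (fun x => φ (f x)) := by
  refine ⟨convex_univ, fun x _ y _ a b ha hb hab => ?_⟩
  calc a • φ (f x) + b • φ (f y) ≤ φ (a • f x + b • f y) :=
        hφconc.2 (Set.mem_univ _) (Set.mem_univ _) ha hb hab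
    _ ≤ φ (f (a • x + b • y)) :=
        hφmono (hf.2 (Set.mem_univ _) (Set.mem_univ _) ha hb hab)

private lemma lse_convex {S A : Type*} [Fintype A] [Nonempty A] (s : S) :
    ConvexOn ℝ Set.univ (fun Q : S × A → ℝ => Real.log (∑ a, Real.exp (Q (s, a)))) := by
  refine ⟨convex_univ, fun x _ y _ a b ha hb hab => ?_⟩
  set Sx := ∑ i, Real.exp (x (s, i)) with hSxdef
  set Sy := ∑ i, Real.exp (y (s, i)) with hSydef
  have hSx : 0 < Sx := Finset.sum_pos (fun i _ => Real.exp_pos _) Finset.univ_nonempty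
  have hSy : 0 < Sy := Finset.sum_pos (fun i _ => Real.exp_pos _) Finset.univ_nonempty
  have key : ∑ i, Real.exp ((a • x + b • y) (s, i)) ≤ Sx ^ a * Sy ^ b := by
    have hterm : ∀ i : A, Real.exp ((a • x + b • y) (s, i)) ≤
        Sx ^ a * Sy ^ b * (a * (Real.exp (x (s, i)) / Sx) + b * (Real.exp (y (s, i)) / Sy)) := by
      intro i
      have hgm : (Real.exp (x (s, i)) / Sx) ^ a * (Real.exp (y (s, i)) / Sy) ^ b ≤
          a * (Real.exp (x (s, i)) / Sx) + b * (Real.exp (y (s, i)) / Sy) :=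
        Real.geom_mean_le_arith_mean2_weighted ha hb
        (div_nonneg (Real.exp_pos _).le hSx.le) (div_nonneg (Real.exp_pos _).le hSy.le) hab
      have heq : Real.exp ((a • x + b • y) (s, i)) =
          Sx ^ a * Sy ^ b * ((Real.exp (x (s, i)) / Sx) ^ a * (Real.exp (y (s, i)) / Sy) ^ b) := by
        rw [Real.div_rpow (Real.exp_pos _).le hSx.le, Real.div_rpow (Real.exp_pos _).le hSy.le]
        have hxa : Real.exp (x (s, i)) ^ a = Real.exp (a * x (s, i)) := by
          rw [mul_comm, Real.exp_mul]
        have hyb : Real.exp (y (s, i)) ^ b = Real.exp (b * y (s, i)) := by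
          rw [mul_comm, Real.exp_mul]
        have hSxa : Sx ^ a ≠ 0 := (Real.rpow_pos_of_pos hSx a).ne'
        have hSyb : Sy ^ b ≠ 0 := (Real.rpow_pos_of_pos hSy b).ne'
        simp only [Pi.add_apply, Pi.smul_apply, smul_eq_mul]
        rw [Real.exp_add, hxa, hyb]
        field_simp
      rw [heq]
      exact mul_le_mul_of_nonneg_left hgm
        (mul_nonneg (Real.rpow_pos_of_pos hSx a).le (Real.rpow_pos_of_pos hSy b).le)
    calc ∑ i, Real.exp ((a • x + b • y) (s, i))
        ≤ ∑ i : A, Sx ^ a * Sy ^ b *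
            (a * (Real.exp (x (s, i)) / Sx) + b * (Real.exp (y (s, i)) / Sy)) :=
          Finset.sum_le_sum fun i _ => hterm i
      _ = Sx ^ a * Sy ^ b := by
          rw [← Finset.mul_sum, Finset.sum_add_distrib, ← Finset.mul_sum, ← Finset.mul_sum,
            ← Finset.sum_div, ← Finset.sum_div, ← hSxdef, ← hSydef,
            div_self hSx.ne', div_self hSy.ne']
          simp [hab]
  have hpos : (0 : ℝ) < ∑ i, Real.exp ((a • x + b • y) (s, i)) :=
    Finset.sum_pos (fun i _ => Real.exp_pos _) Finset.univ_nonempty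
  calc Real.log (∑ i, Real.exp ((a • x + b • y) (s, i)))
      ≤ Real.log (Sx ^ a * Sy ^ b) := Real.log_le_log hpos key
    _ = a * Real.log Sx + b * Real.log Sy := by
        rw [Real.log_mul (Real.rpow_pos_of_pos hSx a).ne' (Real.rpow_pos_of_pos hSy b).ne',
          Real.log_rpow hSx, Real.log_rpow hSy]
    _ = a • Real.log Sx + b • Real.log Sy := by simp [smul_eq_mul]

/-- Proposition 3.5: with V*(s) = log Σ_a exp Q(s,a) and φ concave non-decreasing,
J*(Q) = E_{ρ_E}[φ(Q(s,a) - γ E_{s'}[V*(s')])] - (1-γ) E_{s₀∼p₀}[V*(s₀)]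
is concave in Q. -/
theorem Jstar_concave
    {S A : Type*} [Fintype S] [Fintype A] [Nonempty S] [Nonempty A]
    (γ : ℝ) (hγ0 : 0 < γ) (hγ1 : γ < 1)
    (p0 : S → ℝ) (hp0nn : ∀ s, 0 ≤ p0 s) (hp0sum : ∑ s, p0 s = 1)
    (P : S → A → S → ℝ) (hPnn : ∀ s a s', 0 ≤ P s a s')
    (hPsum : ∀ s a, ∑ s', P s a s' = 1)
    (ρE : S × A → ℝ) (hρEnn : ∀ sa, 0 ≤ ρE sa) (hρEsum : ∑ sa, ρE sa = 1)
    (φ : ℝ → ℝ) (hφconc : ConcaveOn ℝ Set.univ φ) (hφmono : Monotone φ)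
    (V : (S × A → ℝ) → S → ℝ)
    (hV : ∀ Q s, V Q s = Real.log (∑ a, Real.exp (Q (s, a)))) :
    ConcaveOn ℝ Set.univ (fun Q : S × A → ℝ =>
      (∑ sa, ρE sa * φ (Q sa - γ * ∑ s', P sa.1 sa.2 s' * V Q s')) -
        (1 - γ) * ∑ s, p0 s * V Q s) := by
  have hVconv : ∀ s : S, ConvexOn ℝ Set.univ (fun Q : S × A → ℝ => V Q s) := by
    intro s
    simp only [hV]
    exact lse_convex s
  -- inner concave function for each sa
  have hinner : ∀ sa : S × A, ConcaveOn ℝ Set.univ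
      (fun Q : S × A → ℝ => Q sa - γ * ∑ s', P sa.1 sa.2 s' * V Q s') := by
    intro sa
    have hlin : ConcaveOn ℝ Set.univ (fun Q : S × A → ℝ => Q sa) :=
      ⟨convex_univ, fun x _ y _ a b _ _ _ => le_of_eq (by simp)⟩
    have hconv : ConvexOn ℝ Set.univ
        (fun Q : S × A → ℝ => γ * ∑ s', P sa.1 sa.2 s' * V Q s') :=
      convexOn_const_mul hγ0.le
        (convexOn_finsum _ _ fun s' _ =>
          convexOn_const_mul (hPnn _ _ _) (hVconv s'))
    exact hlin.sub hconv
  have hfirst : ConcaveOn ℝ Set.univ (fun Q : S × A → ℝ =>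
      ∑ sa, ρE sa * φ (Q sa - γ * ∑ s', P sa.1 sa.2 s' * V Q s')) := by
    refine concaveOn_finsum _ _ fun sa _ => ?_
    have := (concaveOn_phi_comp hφconc hφmono (hinner sa)).smul (hρEnn sa)
    simpa [Pi.smul_def, smul_eq_mul] using this
  have hsecond : ConvexOn ℝ Set.univ (fun Q : S × A → ℝ =>
      (1 - γ) * ∑ s, p0 s * V Q s) :=
    convexOn_const_mul (by linarith)
      (convexOn_finsum _ _ fun s _ => convexOn_const_mul (hp0nn s) (hVconv s))
  exact hfirst.sub hsecond
end

section
/- In a finite MDP, for a fixed Q : S × A → ℝ, the policy minimizing π ↦ J(π, Q) := E_{ρ_E}[T^π Q] − E_{ρ_π}[T^π Q] − H(π) − ψ(T^π Q) over the inner max-entropy RL problem with reward r = T^π Q is given in closed form by π_Q(a|s) = exp(Q(s,a)) / Σ_{a'} exp(Q(s,a')), which is the unique optimal max-entropy policy for reward r = T^{π_Q} Q. -/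
open Finset

/-- Gibbs' inequality / log-sum-exp bound, with equality case. -/
lemma gibbs_aux {A : Type*} [Fintype A] [Nonempty A] (f p : A → ℝ)
    (hp : ∀ a, 0 < p a) (hs : ∑ a, p a = 1) :
    (∑ a, p a * (f a - Real.log (p a)) ≤ Real.log (∑ a, Real.exp (f a))) ∧
    ((∑ a, p a * (f a - Real.log (p a)) = Real.log (∑ a, Real.exp (f a))) →
      ∀ a, p a = Real.exp (f a) / ∑ a', Real.exp (f a')) := by
  set Z : ℝ := ∑ a, Real.exp (f a) with hZ
  have hZpos : 0 < Z := Finset.sum_pos (fun a _ => Real.exp_pos _) Finset.univ_nonempty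
  set q : A → ℝ := fun a => Real.exp (f a) / Z with hq
  have hqpos : ∀ a, 0 < q a := fun a => div_pos (Real.exp_pos _) hZpos
  have hqsum : ∑ a, q a = 1 := by
    rw [hq]; rw [← Finset.sum_div]; field_simp; exact hZ.symm
  have hlogq : ∀ a, Real.log (q a) = f a - Real.log Z := by
    intro a
    rw [hq]
    rw [Real.log_div (Real.exp_ne_zero _) (ne_of_gt hZpos), Real.log_exp]
  have hterm : ∀ a, p a * (f a - Real.log (p a))
      = p a * Real.log Z + p a * Real.log (q a / p a) := by
    intro a
    rw [Real.log_div (ne_of_gt (hqpos a)) (ne_of_gt (hp a)), hlogq]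
    ring
  have hsplit : ∑ a, p a * (f a - Real.log (p a))
      = Real.log Z + ∑ a, p a * Real.log (q a / p a) := by
    rw [Finset.sum_congr rfl (fun a _ => hterm a), Finset.sum_add_distrib,
      ← Finset.sum_mul, hs, one_mul]
  have hle : ∀ a, p a * Real.log (q a / p a) ≤ q a - p a := by
    intro a
    have h1 : Real.log (q a / p a) ≤ q a / p a - 1 :=
      Real.log_le_sub_one_of_pos (div_pos (hqpos a) (hp a))
    calc p a * Real.log (q a / p a) ≤ p a * (q a / p a - 1) :=
          mul_le_mul_of_nonneg_left h1 (hp a).le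
      _ = q a - p a := by
          have hpa := (hp a).ne'
          field_simp
  have hsumle : ∑ a, p a * Real.log (q a / p a) ≤ 0 := by
    calc ∑ a, p a * Real.log (q a / p a) ≤ ∑ a, (q a - p a) :=
          Finset.sum_le_sum (fun a _ => hle a)
      _ = 0 := by rw [Finset.sum_sub_distrib, hqsum, hs]; ring
  constructor
  · rw [hsplit]; linarith
  · intro heq a
    by_contra hne
    have hstrict : ∑ a, p a * Real.log (q a / p a) < 0 := by
      have hlt : p a * Real.log (q a / p a) < q a - p a := by
        have hne1 : q a / p a ≠ 1 := by
          intro h1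
          exact hne ((div_eq_one_iff_eq (hp a).ne').mp h1).symm
        have h1 : Real.log (q a / p a) < q a / p a - 1 :=
          Real.log_lt_sub_one_of_pos (div_pos (hqpos a) (hp a)) hne1
        calc p a * Real.log (q a / p a) < p a * (q a / p a - 1) :=
              (mul_lt_mul_iff_right₀ (hp a)).mpr h1
          _ = q a - p a := by
              have hpa := (hp a).ne'
              field_simp
      calc ∑ a, p a * Real.log (q a / p a)
          < ∑ a, (q a - p a) :=
            Finset.sum_lt_sum (fun b _ => hle b) ⟨a, Finset.mem_univ a, hlt⟩
        _ = 0 := by rw [Finset.sum_sub_distrib, hqsum, hs]; ring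
    rw [hsplit] at heq
    linarith

open Finset

/-- Telescoping identity for discounted occupancy sums. -/
lemma telescope_aux {S A : Type*} [Fintype S] [Fintype A]
    (γ : ℝ) (p0 c W : S → ℝ) (π : S → A → ℝ) (P : S → A → S → ℝ)
    (g : S → A → ℝ)
    (hg : ∀ s, ∑ a, π s a * g s a = W s)
    (hrec : ∀ s', c s' = p0 s' + γ * ∑ s, ∑ a, c s * π s a * P s a s') :
    ∑ s, ∑ a, (π s a * c s) * (g s a - γ * ∑ s', P s a s' * W s')
      = ∑ s, p0 s * W s := by
  have step : ∀ s a, (π s a * c s) * (g s a - γ * ∑ s', P s a s' * W s')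
      = c s * (π s a * g s a) - γ * ∑ s', (c s * π s a * P s a s') * W s' := by
    intro s a
    rw [mul_sub]
    congr 1
    · ring
    · rw [Finset.mul_sum, Finset.mul_sum]
      rw [Finset.mul_sum]
      apply Finset.sum_congr rfl
      intro s' _
      ring
  calc ∑ s, ∑ a, (π s a * c s) * (g s a - γ * ∑ s', P s a s' * W s')
      = ∑ s, ∑ a, (c s * (π s a * g s a)
          - γ * ∑ s', (c s * π s a * P s a s') * W s') := by
        exact Finset.sum_congr rfl fun s _ =>
          Finset.sum_congr rfl fun a _ => step s a
    _ = (∑ s, c s * W s)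
        - ∑ s', (γ * ∑ s, ∑ a, c s * π s a * P s a s') * W s' := by
        rw [Finset.sum_congr rfl fun s (_ : s ∈ univ) => Finset.sum_sub_distrib _ _]
        rw [Finset.sum_sub_distrib]
        congr 1
        · exact Finset.sum_congr rfl fun s _ => by
            rw [← Finset.mul_sum, hg]
        · -- reorder triple sum
          calc ∑ s, ∑ a, γ * ∑ s', (c s * π s a * P s a s') * W s'
              = ∑ s, ∑ a, ∑ s', γ * ((c s * π s a * P s a s') * W s') := by
                exact Finset.sum_congr rfl fun s _ =>
                  Finset.sum_congr rfl fun a _ => Finset.mul_sum _ _ _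
            _ = ∑ s, ∑ s', ∑ a, γ * ((c s * π s a * P s a s') * W s') :=
                Finset.sum_congr rfl fun s _ => Finset.sum_comm
            _ = ∑ s', ∑ s, ∑ a, γ * ((c s * π s a * P s a s') * W s') :=
                Finset.sum_comm
            _ = ∑ s', (γ * ∑ s, ∑ a, c s * π s a * P s a s') * W s' := by
                refine Finset.sum_congr rfl fun s' _ => ?_
                rw [Finset.mul_sum, Finset.sum_mul]
                refine Finset.sum_congr rfl fun s _ => ?_
                rw [Finset.mul_sum, Finset.sum_mul]
                exact Finset.sum_congr rfl fun a _ => by ring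
    _ = ∑ s, p0 s * W s := by
        have h3 : ∀ s', (γ * ∑ s, ∑ a, c s * π s a * P s a s') * W s'
            = c s' * W s' - p0 s' * W s' := by
          intro s'
          have h4 : γ * ∑ s, ∑ a, c s * π s a * P s a s' = c s' - p0 s' := by
            linarith [hrec s']
          rw [h4]; ring
        rw [Finset.sum_congr rfl fun s' (_ : s' ∈ univ) => h3 s',
          Finset.sum_sub_distrib]
        abel

open Finset

lemma occ_rec_aux {S A : Type*} [Fintype S] [Fintype A]
    (γ : ℝ) (p0 : S → ℝ) (π : S → A → ℝ) (P : S → A → S → ℝ)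
    (d : ℕ → S → ℝ)
    (hd0 : d 0 = p0)
    (hdsucc : ∀ t s', d (t + 1) s' = ∑ s, ∑ a, d t s * π s a * P s a s')
    (hsummable : ∀ s, Summable (fun t => γ ^ t * d t s)) (s' : S) :
    (∑' t : ℕ, γ ^ t * d t s')
      = p0 s' + γ * ∑ s, ∑ a, (∑' t : ℕ, γ ^ t * d t s) * π s a * P s a s' := by
  rw [Summable.tsum_eq_zero_add (hsummable s'), pow_zero, hd0, one_mul]
  congr 1
  calc ∑' t : ℕ, γ ^ (t + 1) * d (t + 1) s'
      = ∑' t : ℕ, ∑ s, ∑ a, (γ * (π s a * P s a s')) * (γ ^ t * d t s) := by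
        refine tsum_congr fun t => ?_
        rw [hdsucc, Finset.mul_sum]
        refine Finset.sum_congr rfl fun s _ => ?_
        rw [Finset.mul_sum]
        exact Finset.sum_congr rfl fun a _ => by ring
    _ = ∑ s, ∑ a, (γ * (π s a * P s a s')) * ∑' t : ℕ, γ ^ t * d t s := by
        rw [Summable.tsum_finsetSum (fun s _ => summable_sum
          (fun a _ => (hsummable s).mul_left _))]
        exact Finset.sum_congr rfl fun s _ => by
          rw [Summable.tsum_finsetSum (fun a _ => (hsummable s).mul_left _)]
          exact Finset.sum_congr rfl fun a _ => tsum_mul_left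
    _ = γ * ∑ s, ∑ a, (∑' t : ℕ, γ ^ t * d t s) * π s a * P s a s' := by
        rw [Finset.mul_sum]
        refine Finset.sum_congr rfl fun s _ => ?_
        rw [Finset.mul_sum]
        exact Finset.sum_congr rfl fun a _ => by ring

/-- Proposition 3.4: for a fixed Q, the softmax policy
π_Q(a|s) = exp Q(s,a) / Σ_{a'} exp Q(s,a') is the unique minimizer of
π ↦ J(π,Q) = E_{ρ_E}[T^π Q] - E_{ρ_π}[T^π Q] - H(π) - ψ(T^π Q)
over stochastic policies, where T^π is the inverse soft Bellman operator,
ρ_π the (unnormalized) occupancy of π, H the discounted causal entropy, and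
ψ(r) = E_{ρ_E}[r - φ(r)] with φ concave and non-decreasing. -/
theorem softmax_policy_minimizes_J
    {S A : Type*} [Fintype S] [Fintype A] [Nonempty S] [Nonempty A]
    (γ : ℝ) (hγ0 : 0 < γ) (hγ1 : γ < 1)
    (p0 : S → ℝ) (hp0pos : ∀ s, 0 < p0 s) (hp0sum : ∑ s, p0 s = 1)
    (P : S → A → S → ℝ) (hPnn : ∀ s a s', 0 ≤ P s a s')
    (hPsum : ∀ s a, ∑ s', P s a s' = 1)
    (ρE : S × A → ℝ) (hρEnn : ∀ sa, 0 ≤ ρE sa) (hρEsum : ∑ sa, ρE sa = 1)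
    (φ : ℝ → ℝ) (hφconc : ConcaveOn ℝ Set.univ φ) (hφmono : Monotone φ)
    (Q : S × A → ℝ)
    -- soft value of a policy
    (V : (S → A → ℝ) → S → ℝ)
    (hV : ∀ π s, V π s = ∑ a, π s a * (Q (s, a) - Real.log (π s a)))
    -- inverse soft Bellman operator applied to Q, as a function of the policy
    (T : (S → A → ℝ) → S × A → ℝ)
    (hT : ∀ π sa, T π sa = Q sa - γ * ∑ s', P sa.1 sa.2 s' * V π s')
    -- state distribution at each time step and unnormalized occupancy of a policy
    (d : (S → A → ℝ) → ℕ → S → ℝ) (hd0 : ∀ π, d π 0 = p0)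
    (hdsucc : ∀ π t s', d π (t + 1) s' = ∑ s, ∑ a, d π t s * π s a * P s a s')
    (occ : (S → A → ℝ) → S → A → ℝ)
    (hocc : ∀ π s a, occ π s a = π s a * ∑' t : ℕ, γ ^ t * d π t s)
    -- discounted causal entropy
    (H : (S → A → ℝ) → ℝ)
    (hH : ∀ π, H π = ∑ s, ∑ a, occ π s a * (-Real.log (π s a)))
    -- reward regularizer ψ_g with g = id - φ
    (ψ : (S × A → ℝ) → ℝ)
    (hψ : ∀ r, ψ r = ∑ sa, ρE sa * (r sa - φ (r sa)))
    -- the objective J(π, Q) as a function of π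
    (J : (S → A → ℝ) → ℝ)
    (hJ : ∀ π, J π = (∑ sa, ρE sa * T π sa) -
        (∑ s, ∑ a, occ π s a * T π (s, a)) - H π - ψ (T π))
    -- the softmax policy induced by Q
    (πQ : S → A → ℝ)
    (hπQ : ∀ s a, πQ s a = Real.exp (Q (s, a)) / ∑ a', Real.exp (Q (s, a'))) :
    ∀ π : S → A → ℝ, (∀ s a, 0 < π s a) → (∀ s, ∑ a, π s a = 1) →
      J πQ ≤ J π ∧ (J π = J πQ → π = πQ) := by
  intro π hπpos hπsum
  set Z : S → ℝ := fun s => ∑ a', Real.exp (Q (s, a')) with hZ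
  have hZpos : ∀ s, 0 < Z s :=
    fun s => Finset.sum_pos (fun a _ => Real.exp_pos _) Finset.univ_nonempty
  have hπQpos : ∀ s a, 0 < πQ s a := by
    intro s a
    rw [hπQ]
    exact div_pos (Real.exp_pos _) (hZpos s)
  have hπQsum : ∀ s, ∑ a, πQ s a = 1 := by
    intro s
    rw [Finset.sum_congr rfl fun a _ => hπQ s a, ← Finset.sum_div]
    exact div_self (hZpos s).ne'
  -- soft value of the softmax policy is log-sum-exp
  have hVQ : ∀ s, V πQ s = Real.log (Z s) := by
    intro s
    rw [hV]
    have hterm : ∀ a, πQ s a * (Q (s, a) - Real.log (πQ s a))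
        = πQ s a * Real.log (Z s) := by
      intro a
      rw [hπQ, Real.log_div (Real.exp_ne_zero _) (hZpos s).ne', Real.log_exp]
      ring_nf
    rw [Finset.sum_congr rfl fun a _ => hterm a, ← Finset.sum_mul, hπQsum,
      one_mul]
  -- Gibbs inequality: V π ≤ V πQ, with equality iff π = πQ at s
  have hVle : ∀ s, V π s ≤ V πQ s := by
    intro s
    rw [hV, hVQ]
    exact (gibbs_aux (fun a => Q (s, a)) (π s) (hπpos s) (hπsum s)).1
  have hVeq : ∀ s, V π s = V πQ s → ∀ a, π s a = πQ s a := by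
    intro s h a
    rw [hV, hVQ] at h
    rw [hπQ]
    exact (gibbs_aux (fun a => Q (s, a)) (π s) (hπpos s) (hπsum s)).2 h a
  -- key formula for J on valid policies
  have keyJ : ∀ ρ : S → A → ℝ, (∀ s a, 0 < ρ s a) → (∀ s, ∑ a, ρ s a = 1) →
      J ρ = (∑ sa, ρE sa * φ (T ρ sa)) - ∑ s, p0 s * V ρ s := by
    intro ρ hρpos hρsum
    -- basic properties of the state distributions
    have hdnn : ∀ t s, 0 ≤ d ρ t s := by
      intro t
      induction t with
      | zero => intro s; rw [hd0]; exact (hp0pos s).le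
      | succ t ih =>
        intro s'
        rw [hdsucc]
        refine Finset.sum_nonneg fun s _ => Finset.sum_nonneg fun a _ => ?_
        exact mul_nonneg (mul_nonneg (ih s) (hρpos s a).le) (hPnn s a s')
    have hdsum1 : ∀ t, ∑ s, d ρ t s = 1 := by
      intro t
      induction t with
      | zero => simp [hd0, hp0sum]
      | succ t ih =>
        rw [Finset.sum_congr rfl fun s' (_ : s' ∈ Finset.univ) => hdsucc ρ t s']
        rw [Finset.sum_comm]
        calc ∑ s, ∑ s', ∑ a, d ρ t s * ρ s a * P s a s'
            = ∑ s, ∑ a, ∑ s', d ρ t s * ρ s a * P s a s' :=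
              Finset.sum_congr rfl fun s _ => Finset.sum_comm
          _ = ∑ s, ∑ a, d ρ t s * ρ s a := by
              refine Finset.sum_congr rfl fun s _ =>
                Finset.sum_congr rfl fun a _ => ?_
              rw [← Finset.mul_sum, hPsum, mul_one]
          _ = 1 := by
              rw [Finset.sum_congr rfl fun s (_ : s ∈ Finset.univ) =>
                (Finset.mul_sum _ _ _).symm]
              rw [Finset.sum_congr rfl fun s (_ : s ∈ Finset.univ) => by
                rw [hρsum s, mul_one]]
              exact ih
    have hdle : ∀ t s, d ρ t s ≤ 1 := by
      intro t s
      calc d ρ t s ≤ ∑ s', d ρ t s' :=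
            Finset.single_le_sum (fun s' _ => hdnn t s') (Finset.mem_univ s)
        _ = 1 := hdsum1 t
    have hsummable : ∀ s, Summable (fun t => γ ^ t * d ρ t s) := by
      intro s
      refine Summable.of_nonneg_of_le
        (fun t => mul_nonneg (pow_nonneg hγ0.le t) (hdnn t s))
        (fun t => ?_) (summable_geometric_of_lt_one hγ0.le hγ1)
      calc γ ^ t * d ρ t s ≤ γ ^ t * 1 :=
            mul_le_mul_of_nonneg_left (hdle t s) (pow_nonneg hγ0.le t)
        _ = γ ^ t := mul_one _
    -- telescoping identity
    have htel : ∑ s, ∑ a, occ ρ s a * (T ρ (s, a) - Real.log (ρ s a))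
        = ∑ s, p0 s * V ρ s := by
      have hrec := occ_rec_aux γ p0 (ρ) P (d ρ) (hd0 ρ) (hdsucc ρ) hsummable
      have := telescope_aux γ p0 (fun s => ∑' t : ℕ, γ ^ t * d ρ t s)
        (V ρ) ρ P (fun s a => Q (s, a) - Real.log (ρ s a))
        (fun s => (hV ρ s).symm)
        (fun s' => by
          have h := hrec s'
          simpa using h)
      rw [← this]
      refine Finset.sum_congr rfl fun s _ => Finset.sum_congr rfl fun a _ => ?_
      rw [hocc, hT]
      ring
    -- assemble
    rw [hJ, hψ, hH]
    have e1 : (∑ sa, ρE sa * T ρ sa) - ∑ sa, ρE sa * (T ρ sa - φ (T ρ sa))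
        = ∑ sa, ρE sa * φ (T ρ sa) := by
      rw [← Finset.sum_sub_distrib]
      exact Finset.sum_congr rfl fun sa _ => by ring
    have e2 : (∑ s, ∑ a, occ ρ s a * T ρ (s, a))
        + (∑ s, ∑ a, occ ρ s a * (-Real.log (ρ s a)))
        = ∑ s, ∑ a, occ ρ s a * (T ρ (s, a) - Real.log (ρ s a)) := by
      rw [← Finset.sum_add_distrib]
      refine Finset.sum_congr rfl fun s _ => ?_
      rw [← Finset.sum_add_distrib]
      exact Finset.sum_congr rfl fun a _ => by ring
    rw [htel] at e2
    linarith
  -- comparison of the rewards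
  have hTle : ∀ sa, T πQ sa ≤ T π sa := by
    intro sa
    rw [hT, hT]
    have : ∑ s', P sa.1 sa.2 s' * V π s' ≤ ∑ s', P sa.1 sa.2 s' * V πQ s' :=
      Finset.sum_le_sum fun s' _ =>
        mul_le_mul_of_nonneg_left (hVle s') (hPnn sa.1 sa.2 s')
    have := mul_le_mul_of_nonneg_left this hγ0.le
    linarith
  have hJπ := keyJ π hπpos hπsum
  have hJπQ := keyJ πQ hπQpos hπQsum
  have hA : ∑ sa, ρE sa * φ (T πQ sa) ≤ ∑ sa, ρE sa * φ (T π sa) :=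
    Finset.sum_le_sum fun sa _ =>
      mul_le_mul_of_nonneg_left (hφmono (hTle sa)) (hρEnn sa)
  have hB : ∑ s, p0 s * V π s ≤ ∑ s, p0 s * V πQ s :=
    Finset.sum_le_sum fun s _ =>
      mul_le_mul_of_nonneg_left (hVle s) (hp0pos s).le
  constructor
  · rw [hJπ, hJπQ]; linarith
  · intro heq
    rw [hJπ, hJπQ] at heq
    have hBeq : ∑ s, p0 s * V πQ s = ∑ s, p0 s * V π s := by linarith
    have hzero : ∑ s, p0 s * (V πQ s - V π s) = 0 := by
      rw [Finset.sum_congr rfl fun s (_ : s ∈ Finset.univ) => mul_sub (p0 s) _ _,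
        Finset.sum_sub_distrib, hBeq]
      ring
    have hterm0 : ∀ s ∈ Finset.univ, p0 s * (V πQ s - V π s) = 0 :=
      (Finset.sum_eq_zero_iff_of_nonneg fun s _ =>
        mul_nonneg (hp0pos s).le (by linarith [hVle s])).mp hzero
    funext s
    have hVs : V π s = V πQ s := by
      have h := hterm0 s (Finset.mem_univ s)
      rcases mul_eq_zero.mp h with h' | h'
      · exact absurd h' (hp0pos s).ne'
      · linarith
    funext a
    exact hVeq s hVs a
end

section
/- Let Q, Q' : S × A → ℝ and π a fixed policy in a finite MDP. If T^π Q = T^π Q', then Q = Q'. In other words, the inverse soft Bellman operator T^π is injective. -/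
/-- The inverse soft Bellman operator T^π is injective: T^π Q = T^π Q' implies Q = Q'. -/
theorem inverse_soft_bellman_injective
    {S A : Type*} [Fintype S] [Fintype A] [Nonempty S] [Nonempty A]
    (γ : ℝ) (hγ0 : 0 < γ) (hγ1 : γ < 1)
    (P : S → A → S → ℝ) (hPnn : ∀ s a s', 0 ≤ P s a s')
    (hPsum : ∀ s a, ∑ s', P s a s' = 1)
    (π : S → A → ℝ) (hπpos : ∀ s a, 0 < π s a) (hπsum : ∀ s, ∑ a, π s a = 1)
    (T : (S × A → ℝ) → (S × A → ℝ))
    (hT : ∀ Q sa, T Q sa = Q sa - γ * ∑ s', P sa.1 sa.2 s' *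
      (∑ a, π s' a * (Q (s', a) - Real.log (π s' a)))) :
    Function.Injective T := by
  intro Q Q' h
  set f : S × A → ℝ := fun sa => Q sa - Q' sa with hf
  have key : ∀ sa, f sa = γ * ∑ s', P sa.1 sa.2 s' * ∑ a, π s' a * f (s', a) := by
    intro sa
    have h1 := congrFun h sa
    rw [hT, hT] at h1
    have h2 : Q sa - Q' sa =
        γ * (∑ s', P sa.1 sa.2 s' * (∑ a, π s' a * (Q (s', a) - Real.log (π s' a)))) -
        γ * (∑ s', P sa.1 sa.2 s' * (∑ a, π s' a * (Q' (s', a) - Real.log (π s' a)))) := by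
      linarith
    show Q sa - Q' sa = _
    rw [h2, ← mul_sub, ← Finset.sum_sub_distrib]
    congr 1
    refine Finset.sum_congr rfl fun s' _ => ?_
    rw [← mul_sub, ← Finset.sum_sub_distrib]
    congr 1
    refine Finset.sum_congr rfl fun a _ => ?_
    ring
  obtain ⟨sa₀, -, hmax⟩ := Finset.exists_max_image Finset.univ (fun sa => |f sa|)
    Finset.univ_nonempty
  set M : ℝ := |f sa₀| with hM
  have hMnn : 0 ≤ M := abs_nonneg _
  have hmax' : ∀ sa, |f sa| ≤ M := fun sa => hmax sa (Finset.mem_univ sa)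
  have inner_bound : ∀ s' : S, |∑ a, π s' a * f (s', a)| ≤ M := by
    intro s'
    calc |∑ a, π s' a * f (s', a)| ≤ ∑ a, |π s' a * f (s', a)| :=
          Finset.abs_sum_le_sum_abs _ _
      _ ≤ ∑ a, π s' a * M := by
          refine Finset.sum_le_sum fun a _ => ?_
          rw [abs_mul, abs_of_pos (hπpos s' a)]
          exact mul_le_mul_of_nonneg_left (hmax' _) (hπpos s' a).le
      _ = M := by rw [← Finset.sum_mul, hπsum, one_mul]
  have hMle : M ≤ γ * M := by
    calc M = |f sa₀| := rfl
      _ = |γ * ∑ s', P sa₀.1 sa₀.2 s' * ∑ a, π s' a * f (s', a)| := by rw [key sa₀]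
      _ = γ * |∑ s', P sa₀.1 sa₀.2 s' * ∑ a, π s' a * f (s', a)| := by
          rw [abs_mul, abs_of_pos hγ0]
      _ ≤ γ * M := by
          refine mul_le_mul_of_nonneg_left ?_ hγ0.le
          calc |∑ s', P sa₀.1 sa₀.2 s' * ∑ a, π s' a * f (s', a)|
              ≤ ∑ s', |P sa₀.1 sa₀.2 s' * ∑ a, π s' a * f (s', a)| :=
                Finset.abs_sum_le_sum_abs _ _
            _ ≤ ∑ s', P sa₀.1 sa₀.2 s' * M := by
                refine Finset.sum_le_sum fun s' _ => ?_
                rw [abs_mul, abs_of_nonneg (hPnn _ _ _)]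
                exact mul_le_mul_of_nonneg_left (inner_bound s') (hPnn _ _ _)
            _ = M := by rw [← Finset.sum_mul, hPsum, one_mul]
  have hM0 : M = 0 := by nlinarith
  funext sa
  have : |f sa| ≤ 0 := hM0 ▸ hmax' sa
  have : f sa = 0 := abs_nonpos_iff.mp this
  have : Q sa - Q' sa = 0 := this
  linarith
end
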